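/- arXiv:1407.8035 — 4 statements merged into one kernel-verified Lean document; each statement's English description precedes it below -/
import Mathlib

section
/- Let G be a graph on n vertices and let t be an integer with 1 ≤ t ≤ ⌊n/2⌋ − 1. Then the chromatic number of the tree graph 𝒯_{G, n−t} is at most the (t+1)-th cut number of G: χ(𝒯_{G,n−t}) ≤ cut_{t+1}(G). -/
open SimpleGraph Finset
open scoped Classical

/-- `H` is a tree subgraph of `G` with exactly `t` vertices. -/
def IsTreeSub {V : Type*} (G : SimpleGraph V) (H : G.Subgraph) (t : ℕ) : Prop :=
  H.coe.IsTree ∧ H.verts.ncard = t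

/-- The tree graph `𝒯_{G,t}`: vertices are tree subgraphs of `G` with `t` vertices,
adjacent iff edge-disjoint. -/
def treeGraph {V : Type*} (G : SimpleGraph V) (t : ℕ) :
    SimpleGraph {H : G.Subgraph // IsTreeSub G H t} :=
  SimpleGraph.fromRel (fun H H' => Disjoint H.1.edgeSet H'.1.edgeSet)

/-- The `r`-th cut number of `G`: the minimum number of edges between the two sides of a
partition of the vertex set into two parts, each of size at least `r`. -/
noncomputable def cutNumber {V : Type*} (G : SimpleGraph V) (r : ℕ) : ℕ :=
  sInf { m | ∃ S : Set V, r ≤ S.ncard ∧ r ≤ Sᶜ.ncard ∧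
    m = {e ∈ G.edgeSet | ∃ a ∈ S, ∃ b ∈ Sᶜ, e = s(a, b)}.ncard }

/-- Every tree subgraph on `n - t` vertices contains an edge of any cut with both sides
of size at least `t + 1`. -/
lemma tree_meets_cut {n t : ℕ} {G : SimpleGraph (Fin n)} {H : G.Subgraph}
    (hH : IsTreeSub G H (n - t)) (S : Set (Fin n))
    (hS : t + 1 ≤ S.ncard) (hSc : t + 1 ≤ Sᶜ.ncard) :
    ∃ e ∈ H.edgeSet, e ∈ {e ∈ G.edgeSet | ∃ a ∈ S, ∃ b ∈ Sᶜ, e = s(a, b)} := by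
  obtain ⟨htree, hcard⟩ := hH
  -- the complement of the vertex set has at most `t` elements
  have hcompl : H.vertsᶜ.ncard ≤ t := by
    have h1 := Set.ncard_add_ncard_compl H.verts
    have h2 : Nat.card (Fin n) = n := by simp
    omega
  -- find a vertex of `H` in `S`
  have hu : (S ∩ H.verts).Nonempty := by
    rw [Set.nonempty_iff_ne_empty]
    intro h
    have hsub : S ⊆ H.vertsᶜ := by
      intro x hx
      intro hxH
      exact Set.eq_empty_iff_forall_notMem.mp h x ⟨hx, hxH⟩
    have := Set.ncard_le_ncard hsub (Set.toFinite _)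
    omega
  have hv : (Sᶜ ∩ H.verts).Nonempty := by
    rw [Set.nonempty_iff_ne_empty]
    intro h
    have hsub : Sᶜ ⊆ H.vertsᶜ := by
      intro x hx
      intro hxH
      exact Set.eq_empty_iff_forall_notMem.mp h x ⟨hx, hxH⟩
    have := Set.ncard_le_ncard hsub (Set.toFinite _)
    omega
  obtain ⟨u, huS, huH⟩ := hu
  obtain ⟨v, hvS, hvH⟩ := hv
  -- connect them by a walk inside `H`
  obtain ⟨p⟩ := htree.isConnected.preconnected (⟨u, huH⟩ : H.verts) ⟨v, hvH⟩
  obtain ⟨d, -, hd1, hd2⟩ := p.exists_boundary_dart (Subtype.val ⁻¹' S) huS hvS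
  have hadj : H.Adj d.fst.val d.snd.val := d.adj
  refine ⟨s(d.fst.val, d.snd.val), hadj, hadj.adj_sub, d.fst.val, hd1, d.snd.val, hd2, rfl⟩

/-- for a graph `G` on `n` vertices and `1 ≤ t ≤ ⌊n/2⌋ − 1`,
`χ(𝒯_{G, n−t}) ≤ cut_{t+1}(G)`. -/
theorem statement2 (n t : ℕ) (ht1 : 1 ≤ t) (ht2 : t ≤ n / 2 - 1)
    (G : SimpleGraph (Fin n)) :
    (treeGraph G (n - t)).chromaticNumber ≤ (cutNumber G (t + 1) : ℕ∞) := by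
  -- the defining set of `cutNumber` is nonempty
  have hk : t + 1 ≤ n / 2 := by omega
  have hne : { m | ∃ S : Set (Fin n), t + 1 ≤ S.ncard ∧ t + 1 ≤ Sᶜ.ncard ∧
      m = {e ∈ G.edgeSet | ∃ a ∈ S, ∃ b ∈ Sᶜ, e = s(a, b)}.ncard }.Nonempty := by
    refine ⟨_, {x : Fin n | (x : ℕ) < n / 2}, ?_, ?_, rfl⟩
    · have : ({x : Fin n | (x : ℕ) < n / 2}).ncard = n / 2 := by
        rw [← Nat.card_coe_set_eq]
        rw [Nat.card_eq_of_equiv_fin ⟨fun x => ⟨x.1, x.2⟩,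
          fun y => ⟨⟨y, lt_of_lt_of_le y.2 (Nat.div_le_self n 2)⟩, y.2⟩,
          fun x => rfl, fun y => rfl⟩]
      omega
    · have h1 := Set.ncard_add_ncard_compl ({x : Fin n | (x : ℕ) < n / 2})
      have h2 : Nat.card (Fin n) = n := by simp
      have h3 : ({x : Fin n | (x : ℕ) < n / 2}).ncard = n / 2 := by
        rw [← Nat.card_coe_set_eq]
        rw [Nat.card_eq_of_equiv_fin ⟨fun x => ⟨x.1, x.2⟩,
          fun y => ⟨⟨y, lt_of_lt_of_le y.2 (Nat.div_le_self n 2)⟩, y.2⟩,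
          fun x => rfl, fun y => rfl⟩]
      omega
  have hmem := Nat.sInf_mem hne
  obtain ⟨S, hS, hSc, hcut⟩ := hmem
  set C := {e ∈ G.edgeSet | ∃ a ∈ S, ∃ b ∈ Sᶜ, e = s(a, b)} with hC
  -- build a coloring of the tree graph by elements of `C`
  have hchoice : ∀ H : {H : G.Subgraph // IsTreeSub G H (n - t)},
      ∃ e, e ∈ H.1.edgeSet ∧ e ∈ C := by
    intro H
    obtain ⟨e, he1, he2⟩ := tree_meets_cut H.2 S hS hSc
    exact ⟨e, he1, he2⟩
  choose col hcol1 hcol2 using hchoice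
  have hcoloring : (treeGraph G (n - t)).Coloring ↥C :=
    Coloring.mk (fun H => ⟨col H, hcol2 H⟩) (by
      intro H H' hadj
      obtain ⟨hne', hdisj⟩ := hadj
      intro heq
      have hdisj' : Disjoint H.1.edgeSet H'.1.edgeSet := by
        rcases hdisj with h | h
        · exact h
        · exact h.symm
      have : col H = col H' := congrArg Subtype.val heq
      exact Set.not_disjoint_iff.mpr ⟨col H, hcol1 H, this ▸ hcol1 H'⟩ hdisj')
  have hcolorable : (treeGraph G (n - t)).Colorable (Fintype.card ↥C) :=
    hcoloring.colorable
  have hcard : Fintype.card ↥C = C.ncard := by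
    rw [Set.ncard_eq_toFinset_card', Set.toFinset_card]
  rw [hcard] at hcolorable
  calc (treeGraph G (n - t)).chromaticNumber ≤ (C.ncard : ℕ∞) :=
        hcolorable.chromaticNumber_le
    _ = (cutNumber G (t + 1) : ℕ∞) := by rw [cutNumber, hcut]
end

section
/- Let G be a graph, v a vertex of G, and σ a linear ordering of E(G). Consider an alternating 2-coloring of E(G) with respect to σ, and let E_v^R ⊆ E(G) be a set of edges containing every red edge incident with v. Suppose there exist t_1 pairwise edge-disjoint (σ,v)-consecutive paths in G such that at most t_2 of them contain an edge of E_v^R. Then there are at least t_1 − t_2 neutral edges incident with v lying in E(G) ∖ E_v^R. -/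
open SimpleGraph Finset
open scoped Classical

private lemma chain_ne_of_infix {α : Type*} {l : List (Option α)}
    (hl : l.reduceOption.Chain' (· ≠ ·)) {x y : α}
    (h : [some x, some y] <:+: l) : x ≠ y := by
  obtain ⟨l₁, l₂, rfl⟩ := h
  have h2 : (l₁ ++ [some x, some y] ++ l₂).reduceOption
      = l₁.reduceOption ++ [x, y] ++ l₂.reduceOption := by
    simp [List.reduceOption_append, List.reduceOption_cons_of_some]
  rw [h2] at hl
  have : ([x, y] : List α).Chain' (· ≠ ·) :=
    hl.infix ⟨l₁.reduceOption, l₂.reduceOption, rfl⟩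
  exact List.isChain_pair.mp this

/-- `σ` is a linear ordering of the edge set of `G`, presented as a duplicate-free list
whose members are exactly the edges of `G`. -/
def IsEdgeOrdering {V : Type*} (G : SimpleGraph V) (σ : List (Sym2 V)) : Prop :=
  σ.Nodup ∧ ∀ e, e ∈ σ ↔ e ∈ G.edgeSet

/-- `c` is an alternating 2-coloring of `E(G)` with respect to the ordering `σ`:
a partial assignment of colors (`some true` = red, `some false` = blue, `none` = neutral)
to edges of `G` such that any two consecutive colored edges get different colors. -/
def IsAltColoring {V : Type*} (G : SimpleGraph V) (σ : List (Sym2 V))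
    (c : Sym2 V → Option Bool) : Prop :=
  (∀ e, c e ≠ none → e ∈ G.edgeSet) ∧
  ((σ.map c).reduceOption).Chain' (· ≠ ·)

/-- given an alternating 2-coloring of `E(G)` with respect to `σ`, a vertex `v`,
and a set `E_v^R` of edges containing every red edge incident with `v`: if there are `t₁`
pairwise edge-disjoint `(σ,v)`-consecutive paths of which at most `t₂` contain an edge of
`E_v^R`, then at least `t₁ − t₂` neutral edges incident with `v` lie in `E(G) ∖ E_v^R`. -/
theorem statement9 {V : Type*} (G : SimpleGraph V) (v : V)
    (σ : List (Sym2 V)) (hσ : IsEdgeOrdering G σ)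
    (c : Sym2 V → Option Bool) (hc : IsAltColoring G σ c)
    (ER : Set (Sym2 V))
    (hER : ∀ e ∈ G.edgeSet, v ∈ e → c e = some true → e ∈ ER)
    (t₁ t₂ : ℕ) (P : Fin t₁ → V × V)
    -- each `P j = (u, w)` encodes a path `u – v – w` of `G`
    (hpath : ∀ j, G.Adj (P j).1 v ∧ G.Adj v (P j).2 ∧ (P j).1 ≠ (P j).2)
    -- the two edges of each path are consecutive in the ordering `σ`
    (hcons : ∀ j, [s((P j).1, v), s(v, (P j).2)] <:+: σ ∨
      [s(v, (P j).2), s((P j).1, v)] <:+: σ)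
    -- the paths are pairwise edge-disjoint
    (hdisj : Pairwise fun j j' =>
      Disjoint ({s((P j).1, v), s(v, (P j).2)} : Set (Sym2 V))
        ({s((P j').1, v), s(v, (P j').2)} : Set (Sym2 V)))
    -- at most `t₂` of the paths contain an edge of `E_v^R`
    (ht₂ : (Finset.univ.filter fun j : Fin t₁ =>
        s((P j).1, v) ∈ ER ∨ s(v, (P j).2) ∈ ER).card ≤ t₂) :
    t₁ - t₂ ≤ {e | e ∈ G.edgeSet \ ER ∧ v ∈ e ∧ c e = none}.ncard := by
  set N := {e | e ∈ G.edgeSet \ ER ∧ v ∈ e ∧ c e = none} with hN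
  -- N is finite since it is contained in the finite edge list σ
  have hNfin : N.Finite := by
    apply Set.Finite.subset σ.toFinset.finite_toSet
    intro e he
    simpa using (hσ.2 e).2 he.1.1
  set S := Finset.univ.filter fun j : Fin t₁ =>
      s((P j).1, v) ∈ ER ∨ s(v, (P j).2) ∈ ER with hS
  set T := Finset.univ \ S with hT
  have hTcard : t₁ - t₂ ≤ T.card := by
    have h1 : T.card = t₁ - S.card := by
      rw [hT, Finset.card_sdiff_of_subset (Finset.subset_univ S)]
      simp
    omega
  -- for each j in T, pick a neutral edge incident with v not in ER
  have key : ∀ j ∈ T, c s((P j).1, v) = none ∨ c s(v, (P j).2) = none := by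
    intro j hj
    rw [hT, Finset.mem_sdiff, hS, Finset.mem_filter] at hj
    push_neg at hj
    obtain ⟨-, hj⟩ := hj
    have hj1 : s((P j).1, v) ∉ ER := (hj (Finset.mem_univ j)).1
    have hj2 : s(v, (P j).2) ∉ ER := (hj (Finset.mem_univ j)).2
    by_contra hcon
    push_neg at hcon
    have he1 : s((P j).1, v) ∈ G.edgeSet := (hpath j).1
    have he2 : s(v, (P j).2) ∈ G.edgeSet := (hpath j).2.1
    -- neither edge is red
    have hr1 : c s((P j).1, v) ≠ some true := fun h =>
      hj1 (hER _ he1 (by simp) h)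
    have hr2 : c s(v, (P j).2) ≠ some true := fun h =>
      hj2 (hER _ he2 (by simp) h)
    have hb1 : c s((P j).1, v) = some false := by
      rcases h : c s((P j).1, v) with _ | b
      · exact absurd h hcon.1
      · rcases b with _ | _
        · rfl
        · exact absurd h hr1
    have hb2 : c s(v, (P j).2) = some false := by
      rcases h : c s(v, (P j).2) with _ | b
      · exact absurd h hcon.2
      · rcases b with _ | _
        · rfl
        · exact absurd h hr2
    -- the two edges are consecutive in σ, both colored blue: contradiction
    have hne : ∀ {a b : Sym2 V}, [a, b] <:+: σ → c a = some false →
        c b = some false → False := by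
      intro a b hab ha hb
      obtain ⟨l₁, l₂, hl⟩ := hab
      have hinf : [c a, c b] <:+: σ.map c :=
        ⟨l₁.map c, l₂.map c, by rw [← hl]; simp⟩
      rw [ha, hb] at hinf
      exact chain_ne_of_infix hc.2 hinf rfl
    rcases hcons j with h | h
    · exact hne h hb1 hb2
    · exact hne h hb2 hb1
  classical
  set f : Fin t₁ → Sym2 V := fun j =>
    if c s((P j).1, v) = none then s((P j).1, v) else s(v, (P j).2) with hf
  have hfmem : ∀ j ∈ T, f j ∈ N := by
    intro j hj
    have hj' := hj
    rw [hT, Finset.mem_sdiff, hS, Finset.mem_filter] at hj'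
    push_neg at hj'
    have hj1 : s((P j).1, v) ∉ ER := (hj'.2 (Finset.mem_univ j)).1
    have hj2 : s(v, (P j).2) ∉ ER := (hj'.2 (Finset.mem_univ j)).2
    rw [hf]
    by_cases h : c s((P j).1, v) = none
    · simp only [h, if_pos]
      exact ⟨⟨(hpath j).1, hj1⟩, by simp, h⟩
    · simp only [h, if_neg, if_false]
      have h2 : c s(v, (P j).2) = none := (key j hj).resolve_left h
      exact ⟨⟨(hpath j).2.1, hj2⟩, by simp, h2⟩
  have hfsel : ∀ j, f j ∈ ({s((P j).1, v), s(v, (P j).2)} : Set (Sym2 V)) := by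
    intro j
    rw [hf]
    by_cases h : c s((P j).1, v) = none <;> simp [h]
  have hfinj : ∀ j ∈ T, ∀ j' ∈ T, f j = f j' → j = j' := by
    intro j _ j' _ hjj'
    by_contra hne
    exact (hdisj hne).ne_of_mem (hfsel j) (hjj' ▸ hfsel j') rfl
  calc t₁ - t₂ ≤ T.card := hTcard
    _ = (T.image f).card := (Finset.card_image_of_injOn hfinj).symm
    _ = ((T.image f : Finset (Sym2 V)) : Set (Sym2 V)).ncard := by
        rw [Set.ncard_coe_finset]
    _ ≤ N.ncard := by
        apply Set.ncard_le_ncard _ hNfin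
        intro e he
        simp only [Finset.coe_image, Set.mem_image, Finset.mem_coe] at he
        obtain ⟨j, hj, rfl⟩ := he
        exact hfmem j hj
end

section
/- Let H be an Eulerian graph (connected with all vertex degrees even) and let G be a subgraph of H. Let σ be a linear ordering of E(G) induced by an Eulerian tour of H, i.e. e < e' in σ whenever e is traversed before e' in the tour. Then in any alternating 2-coloring of E(G) with respect to σ, for every vertex v of G the number of red edges of G incident with v is at most (deg_H(v) + 2)/2, and likewise the number of blue edges incident with v is at most (deg_H(v) + 2)/2. -/
open SimpleGraph Finset
open scoped Classical

/-- If every colored element of `l` lies in the sublist `σ'` and `l` has no duplicates,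
then the colored subsequences coincide. -/
lemma eqRed {α β : Type*} (c : α → Option β) :
    ∀ {σ' l : List α}, σ'.Sublist l → l.Nodup →
      (∀ e ∈ l, c e ≠ none → e ∈ σ') →
      (l.map c).reduceOption = (σ'.map c).reduceOption := by
  intro σ' l hsub
  induction hsub with
  | slnil => simp
  | cons a h ih =>
    intro hnd hcol
    have ha : c a = none := by
      by_contra hne
      exact (List.nodup_cons.mp hnd).1 (h.subset (hcol a List.mem_cons_self hne))
    rw [List.map_cons, ha, List.reduceOption_cons_of_none]
    exact ih (List.nodup_cons.mp hnd).2 fun e he hne => hcol e (List.mem_cons_of_mem a he) hne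
  | cons_cons a h ih =>
    intro hnd hcol
    have hrest : ∀ e ∈ _, c e ≠ none → e ∈ _ := fun e he hne => by
      rcases List.mem_cons.mp (hcol e (List.mem_cons_of_mem a he) hne) with rfl | h'
      · exact absurd he (List.nodup_cons.mp hnd).1
      · exact h'
    have := ih (List.nodup_cons.mp hnd).2 hrest
    cases hca : c a with
    | none => rw [List.map_cons, List.map_cons, hca, List.reduceOption_cons_of_none,
        List.reduceOption_cons_of_none, this]
    | some x => rw [List.map_cons, List.map_cons, hca, List.reduceOption_cons_of_some,
        List.reduceOption_cons_of_some, this]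

/-- Alternation implies no two consecutive elements carry the same color `b`. -/
lemma altChain {α : Type*} (c : α → Option Bool) (b : Bool) :
    ∀ (l : List α), ((l.map c).reduceOption).Chain' (· ≠ ·) →
      l.Chain' (fun e e' => ¬(c e = some b ∧ c e' = some b)) := by
  intro l
  induction l with
  | nil => exact fun _ => List.isChain_nil
  | cons a t ih =>
    intro h
    cases t with
    | nil => exact List.isChain_singleton a
    | cons a' t' =>
      refine List.isChain_cons_cons.mpr ⟨?_, ?_⟩
      · rintro ⟨ha, ha'⟩
        rw [List.map_cons, List.map_cons, ha, ha', List.reduceOption_cons_of_some,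
          List.reduceOption_cons_of_some] at h
        exact (List.isChain_cons_cons.mp h).1 rfl
      · apply ih
        cases hca : c a with
        | none => rwa [List.map_cons, hca, List.reduceOption_cons_of_none] at h
        | some x =>
          rw [List.map_cons, hca, List.reduceOption_cons_of_some] at h
          exact h.tail

lemma lemA {V : Type*} {H : SimpleGraph V} (v : V) (P : Sym2 V → Bool) :
    ∀ (n : ℕ) {x y : V} (p : H.Walk x y), p.length = n →
      p.edges.Chain' (fun e e' => ¬(P e = true ∧ P e' = true)) →
      2 * p.edges.countP (fun e => decide (v ∈ e) && P e) ≤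
        p.edges.countP (fun e => decide (v ∈ e)) +
          (if x = v then 1 else 0) + (if y = v then 1 else 0) := by
  intro n
  induction n using Nat.strong_induction_on with
  | _ n ih =>
    intro x y p hn hch
    cases p with
    | nil => simp
    | cons hxz q =>
      rename_i z
      rw [SimpleGraph.Walk.edges_cons] at hch ⊢
      rw [SimpleGraph.Walk.length_cons] at hn
      simp only [List.countP_cons]
      by_cases hv0 : v ∈ (s(x, z) : Sym2 V)
      · by_cases hz : z = v
        · cases q with
          | nil =>
            have hxv : ¬ x = v := fun h => (H.ne_of_adj hxz) (h.trans hz.symm)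
            simp only [SimpleGraph.Walk.edges_nil, List.countP_nil, Nat.zero_add]
            rw [if_pos hz, if_neg hxv, if_pos (show decide (v ∈ s(x, y)) = true by simp [hv0])]
            by_cases hP : P s(x, y) = true
            · rw [if_pos (show (decide (v ∈ s(x, y)) && P s(x, y)) = true by simp [hv0, hP])]
            · rw [if_neg (show ¬ (decide (v ∈ s(x, y)) && P s(x, y)) = true by simp [hP])]
              omega
          | cons hvw q' =>
            rename_i w
            rw [SimpleGraph.Walk.edges_cons] at hch ⊢
            rw [SimpleGraph.Walk.length_cons] at hn
            simp only [List.countP_cons]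
            have hwv : ¬ w = v := fun h => (H.ne_of_adj hvw) (hz.trans h.symm)
            have hv1 : v ∈ (s(z, w) : Sym2 V) := by rw [hz]; exact Sym2.mem_mk_left v w
            obtain ⟨hrel, hch'⟩ := List.isChain_cons_cons.mp hch
            rw [if_pos (show decide (v ∈ s(x, z)) = true by simp [hv0]),
              if_pos (show decide (v ∈ s(z, w)) = true by simp [hv1])]
            by_cases hP : P s(x, z) = true
            · have hP1 : ¬ P s(z, w) = true := fun h1 => hrel ⟨hP, h1⟩
              have IH := ih q'.length (by omega) q' rfl hch'.tail
              rw [if_neg hwv] at IH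
              rw [if_pos (show (decide (v ∈ s(x, z)) && P s(x, z)) = true by simp [hv0, hP]),
                if_neg (show ¬ (decide (v ∈ s(z, w)) && P s(z, w)) = true by simp [hP1])]
              omega
            · have IH := ih (q'.length + 1) (by omega) (SimpleGraph.Walk.cons hvw q')
                (by rw [SimpleGraph.Walk.length_cons])
                (by rw [SimpleGraph.Walk.edges_cons]; exact hch.tail)
              rw [SimpleGraph.Walk.edges_cons] at IH
              simp only [List.countP_cons] at IH
              rw [if_pos hz] at IH
              rw [if_neg (show ¬ (decide (v ∈ s(x, z)) && P s(x, z)) = true by simp [hP])]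
              rw [if_pos (show decide (v ∈ s(z, w)) = true by simp [hv1])] at IH
              omega
        · have hxv : x = v := by
            rcases Sym2.mem_iff.mp hv0 with h | h
            · exact h.symm
            · exact absurd h.symm hz
          have IH := ih q.length (by omega) q rfl hch.tail
          rw [if_neg hz] at IH
          rw [if_pos hxv, if_pos (show decide (v ∈ s(x, z)) = true by simp [hv0])]
          by_cases hP : P s(x, z) = true
          · rw [if_pos (show (decide (v ∈ s(x, z)) && P s(x, z)) = true by simp [hv0, hP])]
            omega
          · rw [if_neg (show ¬ (decide (v ∈ s(x, z)) && P s(x, z)) = true by simp [hP])]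
            omega
      · have hxv : ¬ x = v := fun h => hv0 (h ▸ Sym2.mem_mk_left x z)
        have hzv : ¬ z = v := fun h => hv0 (h ▸ Sym2.mem_mk_right x z)
        have IH := ih q.length (by omega) q rfl hch.tail
        rw [if_neg hzv] at IH
        rw [if_neg hxv,
          if_neg (show ¬ (decide (v ∈ s(x, z)) && P s(x, z)) = true by simp [hv0]),
          if_neg (show ¬ decide (v ∈ s(x, z)) = true by simp [hv0])]
        omega

/-- let `H` be an Eulerian graph, `G ≤ H` a subgraph, and `σ` an ordering of
`E(G)` induced by an Eulerian tour of `H` (i.e. `σ` is the subsequence of the tour's edge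
list consisting of the edges of `G`). Then in any alternating 2-coloring of `E(G)` with
respect to `σ`, for every vertex `v` the number of red (and likewise blue) edges of `G`
incident with `v` is at most `(deg_H(v) + 2)/2`. -/
theorem statement10 {V : Type*} [Fintype V] (H G : SimpleGraph V) (hGH : G ≤ H)
    (u : V) (W : H.Walk u u) (hW : W.IsEulerian)
    (σ : List (Sym2 V)) (hσ : IsEdgeOrdering G σ) (hsub : σ.Sublist W.edges)
    (c : Sym2 V → Option Bool) (hc : IsAltColoring G σ c) :
    ∀ (v : V) (b : Bool),
      (({e | e ∈ G.edgeSet ∧ v ∈ e ∧ c e = some b}).ncard : ℝ) ≤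
        (((H.neighborSet v).ncard : ℝ) + 2) / 2 := by
  intro v b
  have hnd : W.edges.Nodup := hW.isTrail.edges_nodup
  have hred : (W.edges.map c).reduceOption = (σ.map c).reduceOption :=
    eqRed c hsub hnd (fun e _ hne => (hσ.2 e).mpr (hc.1 e hne))
  have hchain : W.edges.Chain' (fun e e' => ¬(c e = some b ∧ c e' = some b)) :=
    altChain c b W.edges (by rw [hred]; exact hc.2)
  set P : Sym2 V → Bool := fun e => decide (c e = some b) with hP
  have hchain' : W.edges.Chain' (fun e e' => ¬(P e = true ∧ P e' = true)) := by
    refine hchain.imp fun e e' h => ?_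
    simpa [hP] using h
  have key := lemA v P W.length W rfl hchain'
  -- the incident colored edges as a list
  have hset : {e | e ∈ G.edgeSet ∧ v ∈ e ∧ c e = some b} =
      ↑(W.edges.filter (fun e => decide (v ∈ e) && P e)).toFinset := by
    ext e
    simp only [Set.mem_setOf_eq, List.coe_toFinset, Set.mem_setOf_eq, List.mem_filter,
      Bool.and_eq_true, decide_eq_true_eq, hP]
    constructor
    · rintro ⟨h1, h2, h3⟩
      exact ⟨hW.mem_edges_iff.mpr (SimpleGraph.edgeSet_mono hGH h1), h2, h3⟩
    · rintro ⟨h1, h2, h3⟩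
      exact ⟨hc.1 e (by rw [h3]; simp), h2, h3⟩
  have h1 : {e | e ∈ G.edgeSet ∧ v ∈ e ∧ c e = some b}.ncard =
      W.edges.countP (fun e => decide (v ∈ e) && P e) := by
    rw [hset, Set.ncard_coe_finset, List.toFinset_card_of_nodup (hnd.filter _),
      List.countP_eq_length_filter]
  have h2 : W.edges.countP (fun e => decide (v ∈ e)) ≤ H.degree v := by
    classical
    rw [List.countP_eq_length_filter, ← List.toFinset_card_of_nodup (hnd.filter _),
      ← SimpleGraph.card_incidenceFinset_eq_degree]
    apply Finset.card_le_card
    intro e he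
    rw [List.mem_toFinset, List.mem_filter] at he
    rw [SimpleGraph.mem_incidenceFinset]
    exact ⟨W.edges_subset_edgeSet he.1, by simpa using he.2⟩
  have h3 : (H.neighborSet v).ncard = H.degree v := by
    rw [← SimpleGraph.card_neighborFinset_eq_degree, ← Set.ncard_coe_finset]
    congr 1
    ext w
    simp
  have hfin : 2 * {e | e ∈ G.edgeSet ∧ v ∈ e ∧ c e = some b}.ncard ≤
      (H.neighborSet v).ncard + 2 := by
    rw [h1, h3]
    have hbnd : (if u = v then 1 else 0) ≤ 1 := by split <;> omega
    omega
  have h4 : ((2 * {e | e ∈ G.edgeSet ∧ v ∈ e ∧ c e = some b}.ncard : ℕ) : ℝ) ≤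
      (((H.neighborSet v).ncard + 2 : ℕ) : ℝ) := Nat.cast_le.mpr hfin
  push_cast at h4
  rw [le_div_iff₀ (by norm_num : (0:ℝ) < 2)]
  linarith
end

section
/- Let n be an even positive integer. Then the clique number of the spanning tree graph of the complete graph K_n equals n/2; that is, the maximum number of pairwise edge-disjoint spanning trees of K_n is n/2. -/
open SimpleGraph Finset
open scoped Classical

namespace St14

def bfun (n s : ℕ) : ℕ := if s % 2 = 1 then (s+1)/2 else (n - s/2) % n

lemma bfun_eq {n k : ℕ} (hnk : n = 2*k) (hk : 0 < k) {s : ℕ} (hs : s < n) :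
    bfun n s = if s % 2 = 1 then (s+1)/2 else (if s = 0 then 0 else n - s/2) := by
  unfold bfun
  split
  · rfl
  · rcases Nat.eq_zero_or_pos s with rfl | hpos
    · simp
    · rw [if_neg (by omega), Nat.mod_eq_of_lt (by omega)]

lemma bfun_lt {n k : ℕ} (hnk : n = 2*k) (hk : 0 < k) {s : ℕ} (hs : s < n) : bfun n s < n := by
  rw [bfun_eq hnk hk hs]; split_ifs <;> omega

lemma bfun_inj {n k : ℕ} (hnk : n = 2*k) (hk : 0 < k) {s s' : ℕ} (hs : s < n) (hs' : s' < n)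
    (h : bfun n s = bfun n s') : s = s' := by
  rw [bfun_eq hnk hk hs, bfun_eq hnk hk hs'] at h
  split_ifs at h <;> first | contradiction | omega

lemma bfun_sum {n k : ℕ} (hnk : n = 2*k) (hk : 0 < k) {s : ℕ} (hs : s + 1 < n) :
    bfun n s + bfun n (s+1) = (1 - s % 2) ∨ bfun n s + bfun n (s+1) = n + (1 - s % 2) := by
  rw [bfun_eq hnk hk (by omega), bfun_eq hnk hk hs]
  split_ifs <;> first | contradiction | omega

/-- vertex at position `s` of the `j`-th Hamiltonian path -/
def va (n : ℕ) (hn : 0 < n) (j s : ℕ) : Fin n := ⟨(j + bfun n s) % n, Nat.mod_lt _ hn⟩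

lemma va_inj {n k : ℕ} (hnk : n = 2*k) (hk : 0 < k) (hn : 0 < n) {j s s' : ℕ}
    (hs : s < n) (hs' : s' < n) (h : va n hn j s = va n hn j s') : s = s' := by
  have h' : (j + bfun n s) % n = (j + bfun n s') % n := congrArg Fin.val h
  have hb : bfun n s % n = bfun n s' % n :=
    Nat.ModEq.add_left_cancel' j h'
  rw [Nat.mod_eq_of_lt (bfun_lt hnk hk hs), Nat.mod_eq_of_lt (bfun_lt hnk hk hs')] at hb
  exact bfun_inj hnk hk hs hs' hb

lemma va_sum {n k : ℕ} (hnk : n = 2*k) (hk : 0 < k) (hn : 0 < n) {j s : ℕ}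
    (hj : j < k) (hs : s + 1 < n) :
    ((va n hn j s).val + (va n hn j (s+1)).val) % n = 2*j + (1 - s % 2) := by
  show ((j + bfun n s) % n + (j + bfun n (s+1)) % n) % n = _
  rw [← Nat.add_mod]
  rcases bfun_sum hnk hk hs with h | h
  · have h2 : j + bfun n s + (j + bfun n (s+1)) = 2*j + (1 - s % 2) := by omega
    rw [h2, Nat.mod_eq_of_lt (by omega)]
  · have h2 : j + bfun n s + (j + bfun n (s+1)) = 2*j + (1 - s % 2) + n := by omega
    rw [h2, Nat.add_mod_right, Nat.mod_eq_of_lt (by omega)]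


lemma va_succ_ne {n k : ℕ} (hnk : n = 2*k) (hk : 0 < k) (hn : 0 < n) {j s : ℕ}
    (hs : s + 1 < n) : va n hn j (s+1) ≠ va n hn j s := by
  intro h
  have := va_inj hnk hk hn hs (by omega) h
  omega

/-- the `j`-th Hamiltonian path as a walk (from position `s` down to position `0`). -/
def stWalk (n : ℕ) (hn : 0 < n) (hnk : n = 2*(n/2)) (j : ℕ) :
    (s : ℕ) → s < n → (⊤ : SimpleGraph (Fin n)).Walk (va n hn j s) (va n hn j 0)
  | 0, _ => Walk.nil
  | s+1, h =>
    Walk.cons ((SimpleGraph.top_adj _ _).mpr (va_succ_ne hnk (by omega) hn h))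
      (stWalk n hn hnk j s (by omega))

lemma stWalk_support {n : ℕ} (hn : 0 < n) (hnk : n = 2*(n/2)) (j : ℕ) :
    ∀ (s : ℕ) (h : s < n) (u : Fin n),
      u ∈ (stWalk n hn hnk j s h).support ↔ ∃ t, t ≤ s ∧ u = va n hn j t
  | 0, h, u => by
    simp only [stWalk, Walk.support_nil, List.mem_singleton]
    constructor
    · rintro rfl; exact ⟨0, le_rfl, rfl⟩
    · rintro ⟨t, ht, rfl⟩; rw [Nat.le_zero.mp ht]
  | s+1, h, u => by
    simp only [stWalk, Walk.support_cons, List.mem_cons]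
    rw [stWalk_support hn hnk j s (by omega) u]
    constructor
    · rintro (rfl | ⟨t, ht, rfl⟩)
      · exact ⟨s+1, le_rfl, rfl⟩
      · exact ⟨t, by omega, rfl⟩
    · rintro ⟨t, ht, rfl⟩
      rcases Nat.lt_or_ge t (s+1) with h' | h'
      · exact Or.inr ⟨t, by omega, rfl⟩
      · left; congr 1; omega

lemma stWalk_edges {n : ℕ} (hn : 0 < n) (hnk : n = 2*(n/2)) (j : ℕ) :
    ∀ (s : ℕ) (h : s < n) (e : Sym2 (Fin n)),
      e ∈ (stWalk n hn hnk j s h).edges ↔ ∃ t, t < s ∧ e = s(va n hn j (t+1), va n hn j t)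
  | 0, h, e => by
    simp only [stWalk, Walk.edges_nil, List.not_mem_nil, false_iff]
    rintro ⟨t, ht, rfl⟩; omega
  | s+1, h, e => by
    simp only [stWalk, Walk.edges_cons, List.mem_cons]
    rw [stWalk_edges hn hnk j s (by omega) e]
    constructor
    · rintro (rfl | ⟨t, ht, rfl⟩)
      · exact ⟨s, by omega, rfl⟩
      · exact ⟨t, by omega, rfl⟩
    · rintro ⟨t, ht, rfl⟩
      rcases Nat.lt_or_ge t s with h' | h'
      · exact Or.inr ⟨t, h', rfl⟩
      · left; have : t = s := by omega
        subst this; rfl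

/-- the `j`-th Hamiltonian path as a subgraph of `K_n`. -/
def treeSub (n : ℕ) (hn : 0 < n) (hnk : n = 2*(n/2)) (j : ℕ) :
    (⊤ : SimpleGraph (Fin n)).Subgraph :=
  (stWalk n hn hnk j (n-1) (by omega)).toSubgraph

lemma treeSub_verts {n : ℕ} (hn : 0 < n) (hnk : n = 2*(n/2)) (j : ℕ) :
    (treeSub n hn hnk j).verts = Set.univ := by
  have hk : 0 < n/2 := by omega
  apply Set.eq_univ_of_forall
  intro u
  rw [treeSub, Walk.mem_verts_toSubgraph, stWalk_support]
  -- surjectivity of `va`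
  have hinj : Function.Injective (fun t : Fin n => va n hn j t.val) := by
    intro t t' h
    exact Fin.ext (va_inj hnk hk hn t.isLt t'.isLt h)
  have hsurj := Finite.surjective_of_injective hinj
  obtain ⟨t, ht⟩ := hsurj u
  exact ⟨t.val, by omega, ht.symm⟩

lemma treeSub_edgeSet {n : ℕ} (hn : 0 < n) (hnk : n = 2*(n/2)) (j : ℕ) (e : Sym2 (Fin n)) :
    e ∈ (treeSub n hn hnk j).edgeSet ↔
      ∃ t, t < n - 1 ∧ e = s(va n hn j (t+1), va n hn j t) := by
  rw [treeSub, Walk.mem_edges_toSubgraph, stWalk_edges]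


open SimpleGraph.Walk in
lemma no_cycle {V : Type*} {G : SimpleGraph V} (f : V → ℕ)
    (h : ∀ ⦃v w w'⦄, G.Adj v w → G.Adj v w' → f w ≤ f v → f w' ≤ f v → w = w')
    {u : V} (c : G.Walk u u) (hc : c.IsCycle)
    (hmax : ∀ x ∈ c.support, f x ≤ f u) : False := by
  have hnn : ¬ c.Nil := hc.not_nil
  obtain ⟨w1, hadj1, q, rfl⟩ := not_nil_iff.mp hnn
  have h3 := hc.three_le_length
  have hqn : ¬ q.Nil := by
    intro hq
    rw [nil_iff_length_eq] at hq
    simp [hq] at h3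
  have hrn : ¬ q.reverse.Nil := by
    rw [nil_iff_length_eq, Walk.length_reverse]
    rw [nil_iff_length_eq] at hqn
    exact hqn
  obtain ⟨w2, hadj2, q2, hq2⟩ := not_nil_iff.mp hrn
  have hw1 : f w1 ≤ f u := hmax _ (by simp)
  have hw2 : f w2 ≤ f u := by
    apply hmax
    have : w2 ∈ q.reverse.support := by rw [hq2]; simp
    rw [Walk.support_reverse, List.mem_reverse] at this
    simp [this]
  have hww : w1 = w2 := h hadj1 hadj2 hw1 hw2
  -- the edge s(u, w2) is in q.edges
  have hmem : s(u, w2) ∈ q.edges := by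
    have : s(u, w2) ∈ q.reverse.edges := by rw [hq2]; simp
    rwa [Walk.edges_reverse, List.mem_reverse] at this
  have hnodup := hc.edges_nodup
  rw [Walk.edges_cons] at hnodup
  rw [List.nodup_cons] at hnodup
  exact hnodup.1 (hww ▸ hmem)

lemma isAcyclic_of_labeling {V : Type*} {G : SimpleGraph V} (f : V → ℕ)
    (h : ∀ ⦃v w w'⦄, G.Adj v w → G.Adj v w' → f w ≤ f v → f w' ≤ f v → w = w') :
    G.IsAcyclic := by
  intro v c hc
  obtain ⟨u, hu, hmaxf⟩ :=
    Finset.exists_max_image c.support.toFinset f ⟨v, by simp⟩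
  have hu' : u ∈ c.support := List.mem_toFinset.mp hu
  refine no_cycle f h (c.rotate u hu') (hc.rotate hu') ?_
  intro x hx
  apply hmaxf
  rw [List.mem_toFinset]
  rcases eq_or_ne x u with rfl | hxu
  · exact hu'
  · have hx' : x ∈ (c.rotate u hu').support.tail := by
      have := (c.rotate u hu').support_eq_cons
      rw [this] at hx
      rcases List.mem_cons.mp hx with rfl | hx
      · exact absurd rfl hxu
      · exact hx
    have hperm := SimpleGraph.Walk.support_rotate c u hu'
    have : x ∈ c.support.tail := hperm.mem_iff.mp hx'
    exact List.mem_of_mem_tail this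


lemma treeSub_isTree {n : ℕ} (hn : 0 < n) (hnk : n = 2*(n/2)) (j : ℕ) :
    (treeSub n hn hnk j).coe.IsTree := by
  have hk : 0 < n/2 := by omega
  haveI : Nonempty (Fin n) := ⟨⟨0, hn⟩⟩
  constructor
  · exact ((stWalk n hn hnk j (n-1) (by omega)).toSubgraph_connected).coe
  · -- acyclic via position labeling
    set g : Fin n → Fin n := fun t => va n hn j t.val with hg
    have hginj : Function.Injective g := fun t t' h =>
      Fin.ext (va_inj hnk hk hn t.isLt t'.isLt h)
    have hgl : Function.LeftInverse (Function.invFun g) g :=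
      Function.leftInverse_invFun hginj
    have hgr : Function.RightInverse (Function.invFun g) g :=
      Function.rightInverse_invFun (Finite.surjective_of_injective hginj)
    apply isAcyclic_of_labeling (fun u => (Function.invFun g u.val).val)
    have key : ∀ a b : Fin n, (treeSub n hn hnk j).Adj a b →
        (Function.invFun g b).val + 1 = (Function.invFun g a).val ∨
        (Function.invFun g a).val + 1 = (Function.invFun g b).val := by
      intro a b hab
      rw [← SimpleGraph.Subgraph.mem_edgeSet, treeSub_edgeSet] at hab
      obtain ⟨t, ht, heq⟩ := hab
      have h1 : va n hn j (t+1) = g ⟨t+1, by omega⟩ := rfl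
      have h0 : va n hn j t = g ⟨t, by omega⟩ := rfl
      rw [Sym2.eq_iff] at heq
      rcases heq with ⟨rfl, rfl⟩ | ⟨rfl, rfl⟩
      · left
        rw [h1, h0, hgl, hgl]
      · right
        rw [h1, h0, hgl, hgl]
    intro v w w' hvw hvw' hle hle'
    rw [SimpleGraph.Subgraph.coe_adj] at hvw hvw'
    have k1 := key _ _ hvw
    have k2 := key _ _ hvw'
    have hval : (Function.invFun g w.val : Fin n) = Function.invFun g w'.val :=
      Fin.ext (by omega)
    have : (w : Fin n) = w' := by
      have := congrArg g hval
      rwa [hgr, hgr] at this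
    exact Subtype.ext this

lemma treeSub_disjoint {n : ℕ} (hn : 0 < n) (hnk : n = 2*(n/2)) {j j' : ℕ}
    (hj : j < n/2) (hj' : j' < n/2) (hne : j ≠ j') :
    Disjoint (treeSub n hn hnk j).edgeSet (treeSub n hn hnk j').edgeSet := by
  have hk : 0 < n/2 := by omega
  rw [Set.disjoint_left]
  intro e he he'
  rw [treeSub_edgeSet] at he he'
  obtain ⟨t, ht, rfl⟩ := he
  obtain ⟨t', ht', heq⟩ := he'
  have hsum : (va n hn j t).val + (va n hn j (t+1)).val
      = (va n hn j' t').val + (va n hn j' (t'+1)).val := by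
    rw [Sym2.eq_iff] at heq
    rcases heq with ⟨h1, h2⟩ | ⟨h1, h2⟩ <;> rw [h1, h2] <;> omega
  have e1 := va_sum (k := n/2) hnk hk hn hj (by omega : t + 1 < n)
  have e2 := va_sum (k := n/2) hnk hk hn hj' (by omega : t' + 1 < n)
  rw [hsum, e2] at e1
  omega

lemma treeSub_edge_mem {n : ℕ} (hn : 0 < n) (hnk : n = 2*(n/2)) (hn2 : 2 ≤ n) (j : ℕ) :
    s(va n hn j 1, va n hn j 0) ∈ (treeSub n hn hnk j).edgeSet := by
  rw [treeSub_edgeSet]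
  exact ⟨0, by omega, rfl⟩


lemma tree_card_edges {n : ℕ} (H : (⊤ : SimpleGraph (Fin n)).Subgraph)
    (ht : H.coe.IsTree) (hv : H.verts = Set.univ) :
    H.edgeSet.toFinset.card + 1 = n := by
  have h1 := ht.card_edgeFinset
  have h2 : Fintype.card ↥H.verts = n := by
    rw [← Nat.card_eq_fintype_card, Nat.card_coe_set_eq, hv, Set.ncard_univ,
      Nat.card_eq_fintype_card, Fintype.card_fin]
  rw [h2] at h1
  have himg : Sym2.map (Subtype.val : ↥H.verts → Fin n) '' H.coe.edgeSet = H.edgeSet :=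
    SimpleGraph.Subgraph.image_coe_edgeSet_coe H
  have hcards : H.edgeSet.toFinset.card = H.coe.edgeFinset.card := by
    rw [← Set.ncard_eq_toFinset_card', ← himg,
      Set.ncard_image_of_injective _ (Sym2.map.injective Subtype.val_injective),
      Set.ncard_eq_toFinset_card']
    exact congrArg Finset.card (by ext; simp)
  omega

lemma card_le_half {n k : ℕ} (hnk : n = 2*k) (hk : 0 < k)
    (s : Finset ((⊤ : SimpleGraph (Fin n)).Subgraph))
    (htree : ∀ H ∈ s, H.coe.IsTree ∧ H.verts = Set.univ)
    (hdisj : (s : Set ((⊤ : SimpleGraph (Fin n)).Subgraph)).Pairwise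
      fun H H' => Disjoint H.edgeSet H'.edgeSet) :
    s.card ≤ k := by
  have hcard : ∀ H ∈ s, (H.edgeSet.toFinset).card = n - 1 := by
    intro H hH
    have := tree_card_edges H (htree H hH).1 (htree H hH).2
    omega
  have hdisj' : ∀ H ∈ s, ∀ H' ∈ s, H ≠ H' →
      Disjoint H.edgeSet.toFinset H'.edgeSet.toFinset := by
    intro H hH H' hH' hne
    rw [Set.disjoint_toFinset]
    exact hdisj hH hH' hne
  have hbi := Finset.card_biUnion hdisj'
  have hsub : s.biUnion (fun H => H.edgeSet.toFinset) ⊆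
      (⊤ : SimpleGraph (Fin n)).edgeFinset := by
    intro e he
    rw [Finset.mem_biUnion] at he
    obtain ⟨H, hH, he⟩ := he
    rw [Set.mem_toFinset] at he
    rw [SimpleGraph.mem_edgeFinset]
    exact H.edgeSet_subset he
  have htotal : ((⊤ : SimpleGraph (Fin n)).edgeFinset).card = k * (n-1) := by
    rw [SimpleGraph.card_edgeFinset_top_eq_card_choose_two, Fintype.card_fin,
      Nat.choose_two_right]
    have : n * (n - 1) = 2 * (k * (n - 1)) := by
      rw [hnk]; ring
    rw [this, Nat.mul_div_cancel_left _ (by norm_num)]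
  have hsum : ∑ H ∈ s, (H.edgeSet.toFinset).card = s.card * (n - 1) := by
    rw [Finset.sum_congr rfl hcard, Finset.sum_const, smul_eq_mul]
  have hle : s.card * (n - 1) ≤ k * (n - 1) := by
    rw [← hsum, ← hbi, ← htotal]
    exact Finset.card_le_card hsub
  exact Nat.le_of_mul_le_mul_right hle (by omega)

end St14

open St14

/-- for an even positive integer `n`, the clique number of the spanning tree
graph of `K_n` equals `n/2`; that is, the maximum number of pairwise edge-disjoint spanning
trees of `K_n` is `n/2`. -/
theorem statement14 (n : ℕ) (hn : 0 < n) (heven : Even n) :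
    (treeGraph (⊤ : SimpleGraph (Fin n)) n).cliqueNum = n / 2 ∧
    sSup { m | ∃ f : Fin m → (⊤ : SimpleGraph (Fin n)).Subgraph,
        (∀ j, (f j).IsSpanning ∧ (f j).coe.IsTree) ∧
        Pairwise fun j j' => Disjoint (f j).edgeSet (f j').edgeSet } = n / 2 := by
  classical
  obtain ⟨c, hc⟩ := heven
  have hnk : n = 2 * (n / 2) := by omega
  set k := n / 2 with hkdef
  have hk : 0 < k := by omega
  have hn2 : 2 ≤ n := by omega
  -- construction
  set Hf : ℕ → (⊤ : SimpleGraph (Fin n)).Subgraph := fun j => treeSub n hn hnk j with hHf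
  have htree : ∀ j, (Hf j).coe.IsTree := fun j => treeSub_isTree hn hnk j
  have hverts : ∀ j, (Hf j).verts = Set.univ := fun j => treeSub_verts hn hnk j
  have hdisj : ∀ j j', j < k → j' < k → j ≠ j' →
      Disjoint (Hf j).edgeSet (Hf j').edgeSet := fun j j' hj hj' hne =>
    treeSub_disjoint hn hnk hj hj' hne
  have hmemedge : ∀ j, s(va n hn j 1, va n hn j 0) ∈ (Hf j).edgeSet := fun j =>
    treeSub_edge_mem hn hnk hn2 j
  have hinj : ∀ j j', j < k → j' < k → Hf j = Hf j' → j = j' := by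
    intro j j' hj hj' heq
    by_contra hne
    exact Set.disjoint_left.mp (hdisj j j' hj hj' hne) (hmemedge j) (heq ▸ hmemedge j)
  have hIsTreeSub : ∀ j, IsTreeSub (⊤ : SimpleGraph (Fin n)) (Hf j) n := fun j =>
    ⟨htree j, by rw [hverts j, Set.ncard_univ]; simp⟩
  have hvertsu : ∀ (H : (⊤ : SimpleGraph (Fin n)).Subgraph),
      H.verts.ncard = n → H.verts = Set.univ := by
    intro H h
    exact Set.eq_of_subset_of_ncard_le (Set.subset_univ _)
      (by rw [Set.ncard_univ]; simp [h])
  -- the common counting bound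
  have bound : ∀ (s : Finset ((⊤ : SimpleGraph (Fin n)).Subgraph)),
      (∀ H ∈ s, H.coe.IsTree ∧ H.verts = Set.univ) →
      ((s : Set ((⊤ : SimpleGraph (Fin n)).Subgraph)).Pairwise
        fun H H' => Disjoint H.edgeSet H'.edgeSet) →
      s.card ≤ k := fun s h1 h2 => card_le_half hnk hk s h1 h2
  constructor
  · -- clique number
    have hcb : ∀ m ∈ {m | ∃ t, (treeGraph (⊤ : SimpleGraph (Fin n)) n).IsNClique m t},
        m ≤ k := by
      rintro m ⟨T, hT⟩
      have hcard : (T.image (fun x => x.val)).card = m := by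
        rw [Finset.card_image_of_injective _ Subtype.val_injective, hT.card_eq]
      rw [← hcard]
      apply bound
      · intro H hH
        rw [Finset.mem_image] at hH
        obtain ⟨x, hx, rfl⟩ := hH
        exact ⟨x.2.1, hvertsu _ x.2.2⟩
      · intro H hH H' hH' hne
        rw [Finset.mem_coe, Finset.mem_image] at hH hH'
        obtain ⟨x, hx, rfl⟩ := hH
        obtain ⟨x', hx', rfl⟩ := hH'
        have hxx : x ≠ x' := fun h => hne (congrArg Subtype.val h)
        have hadj := hT.isClique hx hx' hxx
        rw [treeGraph, SimpleGraph.fromRel_adj] at hadj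
        exact hadj.2.elim id fun h => h.symm
    have hclique : (treeGraph (⊤ : SimpleGraph (Fin n)) n).IsNClique k
        ((Finset.univ : Finset (Fin k)).image
          (fun j => (⟨Hf j.val, hIsTreeSub j.val⟩ : {H // IsTreeSub (⊤ : SimpleGraph (Fin n)) H n}))) := by
      constructor
      · intro x hx y hy hxy
        rw [Finset.coe_image, Set.mem_image] at hx hy
        obtain ⟨j, _, rfl⟩ := hx
        obtain ⟨j', _, rfl⟩ := hy
        have hjj : j.val ≠ j'.val := by
          intro h
          exact hxy (by simp [Subtype.ext_iff, h])
        rw [treeGraph, SimpleGraph.fromRel_adj]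
        exact ⟨hxy, Or.inl (hdisj _ _ j.isLt j'.isLt hjj)⟩
      · rw [Finset.card_image_of_injective _ ?_, Finset.card_univ, Fintype.card_fin]
        intro j j' h
        rw [Subtype.ext_iff] at h
        exact Fin.ext (hinj _ _ j.isLt j'.isLt h)
    apply le_antisymm
    · exact csSup_le ⟨0, ⟨∅, SimpleGraph.isNClique_empty.mpr rfl⟩⟩ hcb
    · exact le_csSup ⟨k, hcb⟩ ⟨_, hclique⟩
  · -- sSup of disjoint spanning tree families
    have hub : ∀ m ∈ { m | ∃ f : Fin m → (⊤ : SimpleGraph (Fin n)).Subgraph,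
        (∀ j, (f j).IsSpanning ∧ (f j).coe.IsTree) ∧
        Pairwise fun j j' => Disjoint (f j).edgeSet (f j').edgeSet }, m ≤ k := by
      rintro m ⟨f, hprop, hpair⟩
      have hvu : ∀ j, (f j).verts = Set.univ := fun j => (hprop j).1.verts_eq_univ
      have hne : ∀ j, (f j).edgeSet.Nonempty := by
        intro j
        have hcard := tree_card_edges (f j) (hprop j).2 (hvu j)
        rw [← Set.toFinset_nonempty, ← Finset.card_pos]
        omega
      have hfinj : Function.Injective f := by
        intro i i' h
        by_contra hii
        have hd : Disjoint (f i).edgeSet (f i').edgeSet := hpair hii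
        rw [h, disjoint_self] at hd
        obtain ⟨e, he⟩ := hne i'
        rw [hd] at he
        simp at he
      have hcard : (Finset.univ.image f).card = m := by
        rw [Finset.card_image_of_injective _ hfinj, Finset.card_univ, Fintype.card_fin]
      rw [← hcard]
      apply bound
      · intro H hH
        rw [Finset.mem_image] at hH
        obtain ⟨j, _, rfl⟩ := hH
        exact ⟨(hprop j).2, hvu j⟩
      · intro H hH H' hH' hne'
        rw [Finset.mem_coe, Finset.mem_image] at hH hH'
        obtain ⟨j, _, rfl⟩ := hH
        obtain ⟨j', _, rfl⟩ := hH'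
        exact hpair (fun h => hne' (congrArg f h))
    have hmem : k ∈ { m | ∃ f : Fin m → (⊤ : SimpleGraph (Fin n)).Subgraph,
        (∀ j, (f j).IsSpanning ∧ (f j).coe.IsTree) ∧
        Pairwise fun j j' => Disjoint (f j).edgeSet (f j').edgeSet } := by
      refine ⟨fun j => Hf j.val, fun j => ⟨fun v => by rw [hverts]; trivial, htree j.val⟩, ?_⟩
      intro i i' hii
      exact hdisj _ _ i.isLt i'.isLt (fun h => hii (Fin.ext h))
    apply le_antisymm
    · refine csSup_le ⟨0, ⟨Fin.elim0, fun j => j.elim0, fun i => i.elim0⟩⟩ hub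
    · exact le_csSup ⟨k, hub⟩ hmem
end
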